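/- There exist orientation-preserving homeomorphisms f and g of [0,1] such that the standard middle-thirds Cantor set C satisfies f(C) = C and g(C) = C, and such that, for the group G generated by f and g, every point x ∈ C with x ≠ 0 and x ≠ 1 satisfies: the closure of the G-orbit of x equals C. -/

import Mathlib

open Set Topology Filter

/-- Orientation-preserving homeomorphisms of `[0,1]`, i.e. increasing homeomorphisms of
`[0,1]` onto itself, are exactly the order isomorphisms of the unit interval
(an increasing bijection of `[0,1]` is automatically a homeomorphism). -/
abbrev IntervalHomeo := unitInterval ≃o unitInterval

/-- The `G`-orbit of a point `x`. -/
def orbit (G : Subgroup IntervalHomeo) (x : unitInterval) : Set unitInterval :=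
  {y | ∃ g ∈ G, g x = y}

/-- A set `M` is `G`-invariant if `g(M) = M` for every `g ∈ G`. -/
def Invariant (G : Subgroup IntervalHomeo) (M : Set unitInterval) : Prop :=
  ∀ g ∈ G, ⇑(g : IntervalHomeo) '' M = M

/-- The open interval `(0,1)` inside `[0,1]`. -/
def openI : Set unitInterval := {x | (x : ℝ) ∈ Set.Ioo (0 : ℝ) 1}

/-- `M` is contained in `S` and closed in the subspace topology of `S`. -/
def ClosedIn (S M : Set unitInterval) : Prop := M ⊆ S ∧ closure M ∩ S ⊆ M

/-- The standard middle-thirds Cantor set: points of `[0,1]` admitting a ternary expansion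
using only the digits `0` and `2`. -/
def cantorC : Set ℝ :=
  {x | ∃ a : ℕ → ℕ, (∀ n, a n = 0 ∨ a n = 2) ∧ x = ∑' n, (a n : ℝ) / 3 ^ (n + 1)}

/-- The middle-thirds Cantor set as a subset of the unit interval. -/
def cantorI : Set unitInterval := {x | (x : ℝ) ∈ cantorC}

noncomputable section

def dval (b : Bool) : ℝ := if b then 2 else 0

def cval (s : ℕ → Bool) : ℝ := ∑' n, dval (s n) / 3 ^ (n + 1)

lemma dval_nonneg (b : Bool) : 0 ≤ dval b := by cases b <;> simp [dval]
lemma dval_le_two (b : Bool) : dval b ≤ 2 := by cases b <;> norm_num [dval]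

lemma term_nonneg (s : ℕ → Bool) (n : ℕ) : 0 ≤ dval (s n) / 3 ^ (n + 1) :=
  div_nonneg (dval_nonneg _) (by positivity)

lemma term_le (s : ℕ → Bool) (n : ℕ) : dval (s n) / 3 ^ (n + 1) ≤ 2/3 * (1/3) ^ n := by
  have h1 : dval (s n) / 3 ^ (n + 1) ≤ 2 / 3 ^ (n+1) := by
    gcongr
    exact dval_le_two _
  have h2 : (2:ℝ) / 3 ^ (n+1) = 2/3 * (1/3) ^ n := by
    rw [pow_succ, one_div, inv_pow]
    field_simp
  linarith

lemma summable_bound : Summable (fun n : ℕ => 2/3 * (1/3 : ℝ) ^ n) :=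
  (summable_geometric_of_lt_one (by norm_num) (by norm_num)).mul_left _

lemma summable_cval (s : ℕ → Bool) : Summable (fun n => dval (s n) / 3 ^ (n + 1)) :=
  Summable.of_nonneg_of_le (term_nonneg s) (term_le s) summable_bound

def sh (s : ℕ → Bool) : ℕ → Bool := fun n => s (n + 1)

lemma cval_rec (s : ℕ → Bool) : cval s = dval (s 0) / 3 + cval (sh s) / 3 := by
  rw [cval, Summable.tsum_eq_zero_add (summable_cval s)]
  congr 1
  · norm_num
  · rw [cval, ← tsum_div_const]
    congr 1 with n
    rw [sh]
    ring

lemma cval_nonneg (s : ℕ → Bool) : 0 ≤ cval s :=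
  tsum_nonneg (term_nonneg s)

lemma cval_le_one (s : ℕ → Bool) : cval s ≤ 1 := by
  have h : cval s ≤ ∑' n : ℕ, 2/3 * (1/3 : ℝ) ^ n :=
    Summable.tsum_le_tsum (term_le s) (summable_cval s) summable_bound
  have h2 : ∑' n : ℕ, 2/3 * (1/3 : ℝ) ^ n = 1 := by
    rw [tsum_mul_left, tsum_geometric_of_lt_one (by norm_num) (by norm_num)]
    norm_num
  linarith

def cons (d : Bool) (s : ℕ → Bool) : ℕ → Bool := fun n => match n with
  | 0 => d
  | n + 1 => s n

@[simp] lemma cons_zero (d : Bool) (s : ℕ → Bool) : cons d s 0 = d := rfl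
@[simp] lemma cons_succ (d : Bool) (s : ℕ → Bool) (n : ℕ) : cons d s (n+1) = s n := rfl
@[simp] lemma sh_cons (d : Bool) (s : ℕ → Bool) : sh (cons d s) = s := rfl
lemma cons_sh (s : ℕ → Bool) : cons (s 0) (sh s) = s := by
  funext n; cases n <;> rfl

lemma cval_cons (d : Bool) (s : ℕ → Bool) : cval (cons d s) = dval d / 3 + cval s / 3 := by
  rw [cval_rec]; rfl

@[simp] lemma dval_false : dval false = 0 := rfl
@[simp] lemma dval_true : dval true = 2 := rfl

/-- prefix rewriting map of `f` : 0σ ↦ 00σ, 20σ ↦ 02σ, 22σ ↦ 2σ -/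
def fstep (s : ℕ → Bool) : ℕ → Bool :=
  if s 0 then
    (if s 1 then cons true (sh (sh s)) else cons false (cons true (sh (sh s))))
  else cons false s

/-- prefix rewriting map of `g` : identity on 0σ, 2σ ↦ 2 (fstep σ) -/
def gstep (s : ℕ → Bool) : ℕ → Bool :=
  if s 0 then cons true (fstep (sh s)) else s

lemma fstep_cons0 (s : ℕ → Bool) : fstep (cons false s) = cons false (cons false s) := by
  simp [fstep]
lemma fstep_cons20 (s : ℕ → Bool) :
    fstep (cons true (cons false s)) = cons false (cons true s) := by
  simp [fstep]
lemma eq_cons2 (t : ℕ → Bool) : t = cons (t 0) (cons (t 1) (sh (sh t))) := by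
  funext n
  match n with
  | 0 => rfl
  | 1 => rfl
  | n + 2 => rfl
lemma fstep_cons22' (s : ℕ → Bool) :
    fstep (cons true (cons true s)) = cons true s := by
  simp [fstep]
lemma gstep_cons0 (s : ℕ → Bool) : gstep (cons false s) = cons false s := by simp [gstep]
lemma gstep_cons2 (s : ℕ → Bool) : gstep (cons true s) = cons true (fstep s) := by simp [gstep]

lemma fstep_surj : Function.Surjective fstep := by
  intro t
  have ht : t = cons (t 0) (cons (t 1) (sh (sh t))) := eq_cons2 t
  have ht1 : t = cons (t 0) (sh t) := (cons_sh t).symm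
  rcases h0 : t 0 with _ | _
  · rw [h0] at ht
    rcases h1 : t 1 with _ | _
    · rw [h1] at ht
      exact ⟨cons false (sh (sh t)), by rw [fstep_cons0, ← ht]⟩
    · rw [h1] at ht
      exact ⟨cons true (cons false (sh (sh t))), by rw [fstep_cons20, ← ht]⟩
  · rw [h0] at ht1
    exact ⟨cons true (cons true (sh t)), by rw [fstep_cons22', ← ht1]⟩

lemma gstep_surj : Function.Surjective gstep := by
  intro t
  rcases h0 : t 0 with _ | _
  · exact ⟨t, by rw [gstep, h0]; rfl⟩
  · obtain ⟨σ, hσ⟩ := fstep_surj (sh t)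
    refine ⟨cons true σ, ?_⟩
    rw [gstep_cons2, hσ, ← h0]
    exact cons_sh t

/-- The piecewise-linear homeomorphism `f` on the reals. -/
def F (x : ℝ) : ℝ := if x ≤ 2/3 then x/3 else if x ≤ 7/9 then x - 4/9 else 3*x - 2
def Fi (x : ℝ) : ℝ := if x ≤ 2/9 then 3*x else if x ≤ 1/3 then x + 4/9 else (x+2)/3
def G (x : ℝ) : ℝ := if x ≤ 2/3 then x else 2/3 + F (3*x - 2) / 3
def Gi (x : ℝ) : ℝ := if x ≤ 2/3 then x else 2/3 + Fi (3*x - 2) / 3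

lemma F_mono : Monotone F := by
  intro x y h
  unfold F
  split_ifs <;> linarith

lemma Fi_mono : Monotone Fi := by
  intro x y h
  unfold Fi
  split_ifs <;> linarith

lemma F_mem {x : ℝ} (h0 : 0 ≤ x) (h1 : x ≤ 1) : 0 ≤ F x ∧ F x ≤ 1 := by
  unfold F; split_ifs <;> constructor <;> linarith

lemma Fi_mem {x : ℝ} (h0 : 0 ≤ x) (h1 : x ≤ 1) : 0 ≤ Fi x ∧ Fi x ≤ 1 := by
  unfold Fi; split_ifs <;> constructor <;> linarith

lemma Fi_F {x : ℝ} (h0 : 0 ≤ x) (h1 : x ≤ 1) : Fi (F x) = x := by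
  unfold F Fi; split_ifs <;> linarith

lemma F_Fi {x : ℝ} (h0 : 0 ≤ x) (h1 : x ≤ 1) : F (Fi x) = x := by
  unfold F Fi; split_ifs <;> linarith

lemma F_pos {x : ℝ} (h : 0 < x) : 0 < F x := by
  unfold F; split_ifs <;> linarith

lemma Fi_pos {x : ℝ} (h : 0 < x) : 0 < Fi x := by
  unfold Fi; split_ifs <;> linarith

lemma G_mem {x : ℝ} (h0 : 0 ≤ x) (h1 : x ≤ 1) : 0 ≤ G x ∧ G x ≤ 1 := by
  unfold G
  split_ifs with h
  · exact ⟨h0, h1⟩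
  · have := F_mem (x := 3*x - 2) (by linarith) (by linarith)
    constructor <;> linarith [this.1, this.2]

lemma Gi_mem {x : ℝ} (h0 : 0 ≤ x) (h1 : x ≤ 1) : 0 ≤ Gi x ∧ Gi x ≤ 1 := by
  unfold Gi
  split_ifs with h
  · exact ⟨h0, h1⟩
  · have := Fi_mem (x := 3*x - 2) (by linarith) (by linarith)
    constructor <;> linarith [this.1, this.2]

lemma G_mono : Monotone G := by
  intro x y h
  unfold G
  split_ifs with hx hy hy
  · exact h
  · have : 0 < F (3*y - 2) := F_pos (by linarith)
    linarith
  · linarith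
  · have := F_mono (show 3*x - 2 ≤ 3*y - 2 by linarith)
    linarith

lemma Gi_mono : Monotone Gi := by
  intro x y h
  unfold Gi
  split_ifs with hx hy hy
  · exact h
  · have : 0 < Fi (3*y - 2) := Fi_pos (by linarith)
    linarith
  · linarith
  · have := Fi_mono (show 3*x - 2 ≤ 3*y - 2 by linarith)
    linarith

lemma Gi_G {x : ℝ} (h0 : 0 ≤ x) (h1 : x ≤ 1) : Gi (G x) = x := by
  by_cases h : x ≤ 2/3
  · rw [G, if_pos h, Gi, if_pos h]
  · have hF : 0 < F (3*x-2) := F_pos (by linarith)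
    rw [G, if_neg h, Gi, if_neg (by linarith)]
    have h3 : 3 * (2/3 + F (3*x-2)/3) - 2 = F (3*x - 2) := by ring
    rw [h3, Fi_F (by linarith) (by linarith)]
    linarith

lemma G_Gi {x : ℝ} (h0 : 0 ≤ x) (h1 : x ≤ 1) : G (Gi x) = x := by
  by_cases h : x ≤ 2/3
  · rw [Gi, if_pos h, G, if_pos h]
  · have hF : 0 < Fi (3*x-2) := Fi_pos (by linarith)
    rw [Gi, if_neg h, G, if_neg (by linarith)]
    have h3 : 3 * (2/3 + Fi (3*x-2)/3) - 2 = Fi (3*x - 2) := by ring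
    rw [h3, F_Fi (by linarith) (by linarith)]
    linarith

lemma cval_le_third {s : ℕ → Bool} (h : s 0 = false) : cval s ≤ 1/3 := by
  have := cval_rec s
  rw [h] at this
  have h1 := cval_le_one (sh s)
  simp [dval] at this
  linarith

lemma F_cval (s : ℕ → Bool) : F (cval s) = cval (fstep s) := by
  rcases h0 : s 0 with _ | _
  · have hle : cval s ≤ 1/3 := cval_le_third h0
    have hstep : fstep s = cons false s := by simp [fstep, h0]
    rw [hstep, cval_cons, F, if_pos (by linarith)]
    simp [dval]
  · have hs2 : s = cons true (cons (s 1) (sh (sh s))) := by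
      rw [← h0]; exact eq_cons2 s
    set v := cval (sh (sh s)) with hvdef
    have hv0 := cval_nonneg (sh (sh s))
    have hv1 := cval_le_one (sh (sh s))
    rcases h1 : s 1 with _ | _
    · rw [h1] at hs2
      have hcv : cval s = 2/3 + v/9 := by
        conv_lhs => rw [hs2]
        rw [cval_cons, cval_cons]
        simp [dval]
        ring
      have hstep : fstep s = cons false (cons true (sh (sh s))) := by
        conv_lhs => rw [hs2, fstep_cons20]
      rw [hstep, cval_cons, cval_cons, F]
      split_ifs with hA hB <;> simp [dval] <;> linarith
    · rw [h1] at hs2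
      have hcv : cval s = 8/9 + v/9 := by
        conv_lhs => rw [hs2]
        rw [cval_cons, cval_cons]
        simp [dval]
        ring
      have hstep : fstep s = cons true (sh (sh s)) := by
        conv_lhs => rw [hs2, fstep_cons22']
      rw [hstep, cval_cons, F]
      split_ifs with hA hB <;> simp [dval] <;> linarith

lemma F_zero : F 0 = 0 := by norm_num [F]

lemma G_cval (s : ℕ → Bool) : G (cval s) = cval (gstep s) := by
  rcases h0 : s 0 with _ | _
  · have hle : cval s ≤ 1/3 := cval_le_third h0
    have hstep : gstep s = s := by simp [gstep, h0]
    rw [hstep, G, if_pos (by linarith)]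
  · have hs1 : s = cons true (sh s) := by rw [← h0]; exact (cons_sh s).symm
    set w := cval (sh s) with hwdef
    have hw0 := cval_nonneg (sh s)
    have hw1 := cval_le_one (sh s)
    have hcv : cval s = 2/3 + w/3 := by
      rw [cval_rec s, h0]
      simp [dval]
      rfl
    have hstep : gstep s = cons true (fstep (sh s)) := by
      conv_lhs => rw [hs1, gstep_cons2]
    rw [hstep, cval_cons, ← F_cval]
    rw [G]
    split_ifs with h
    · have hw : cval (sh s) = 0 := le_antisymm (by linarith [hwdef]) hw0
      rw [hw, F_zero]
      simp [dval]
      linarith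
    · rw [show 3 * cval s - 2 = cval (sh s) by rw [← hwdef]; linarith]
      simp [dval]
      try ring

def fI : unitInterval → unitInterval := fun x =>
  ⟨F x, (F_mem x.2.1 x.2.2).1, (F_mem x.2.1 x.2.2).2⟩
def fiI : unitInterval → unitInterval := fun x =>
  ⟨Fi x, (Fi_mem x.2.1 x.2.2).1, (Fi_mem x.2.1 x.2.2).2⟩
def gI : unitInterval → unitInterval := fun x =>
  ⟨G x, (G_mem x.2.1 x.2.2).1, (G_mem x.2.1 x.2.2).2⟩
def giI : unitInterval → unitInterval := fun x =>
  ⟨Gi x, (Gi_mem x.2.1 x.2.2).1, (Gi_mem x.2.1 x.2.2).2⟩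

def fio : IntervalHomeo :=
  Equiv.toOrderIso ⟨fI, fiI, fun x => Subtype.ext (Fi_F x.2.1 x.2.2),
      fun x => Subtype.ext (F_Fi x.2.1 x.2.2)⟩
    (fun x y h => Subtype.mk_le_mk.mpr (F_mono (Subtype.coe_le_coe.mpr h)))
    (fun x y h => Subtype.mk_le_mk.mpr (Fi_mono (Subtype.coe_le_coe.mpr h)))

def gio : IntervalHomeo :=
  Equiv.toOrderIso ⟨gI, giI, fun x => Subtype.ext (Gi_G x.2.1 x.2.2),
      fun x => Subtype.ext (G_Gi x.2.1 x.2.2)⟩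
    (fun x y h => Subtype.mk_le_mk.mpr (G_mono (Subtype.coe_le_coe.mpr h)))
    (fun x y h => Subtype.mk_le_mk.mpr (Gi_mono (Subtype.coe_le_coe.mpr h)))

def ival (s : ℕ → Bool) : unitInterval := ⟨cval s, cval_nonneg s, cval_le_one s⟩

lemma fio_ival (s : ℕ → Bool) : fio (ival s) = ival (fstep s) :=
  Subtype.ext (F_cval s)

lemma gio_ival (s : ℕ → Bool) : gio (ival s) = ival (gstep s) :=
  Subtype.ext (G_cval s)

def GG : Subgroup IntervalHomeo := Subgroup.closure {fio, gio}

lemma fio_mem : fio ∈ GG := Subgroup.subset_closure (Set.mem_insert _ _)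
lemma gio_mem : gio ∈ GG :=
  Subgroup.subset_closure (Set.mem_insert_of_mem _ (Set.mem_singleton _))

def Reach (s t : ℕ → Bool) : Prop := ∃ h ∈ GG, h (ival s) = ival t

lemma Reach.refl (s : ℕ → Bool) : Reach s s := ⟨1, one_mem _, rfl⟩

lemma Reach.symm {s t : ℕ → Bool} (h : Reach s t) : Reach t s := by
  obtain ⟨e, he, hx⟩ := h
  exact ⟨e⁻¹, inv_mem he, by rw [← hx]; exact e.inv_apply_self _⟩

lemma Reach.trans {s t u : ℕ → Bool} (h1 : Reach s t) (h2 : Reach t u) : Reach s u := by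
  obtain ⟨e, he, hx⟩ := h1
  obtain ⟨e', he', hx'⟩ := h2
  exact ⟨e' * e, mul_mem he' he, by rw [RelIso.mul_apply, hx, hx']⟩

lemma reach_f (s : ℕ → Bool) : Reach s (fstep s) := ⟨fio, fio_mem, fio_ival s⟩
lemma reach_g (s : ℕ → Bool) : Reach s (gstep s) := ⟨gio, gio_mem, gio_ival s⟩

lemma R1 (σ : ℕ → Bool) : Reach (cons false σ) (cons false (cons false σ)) := by
  have := reach_f (cons false σ)
  rwa [fstep_cons0] at this

lemma R2 (σ : ℕ → Bool) : Reach (cons true (cons false σ)) (cons false (cons true σ)) := by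
  have := reach_f (cons true (cons false σ))
  rwa [fstep_cons20] at this

lemma R3 (σ : ℕ → Bool) : Reach (cons true (cons true σ)) (cons true σ) := by
  have := reach_f (cons true (cons true σ))
  rwa [fstep_cons22'] at this

lemma R4 (σ : ℕ → Bool) :
    Reach (cons true (cons false σ)) (cons true (cons false (cons false σ))) := by
  have := reach_g (cons true (cons false σ))
  rwa [gstep_cons2, fstep_cons0] at this

lemma R5 (σ : ℕ → Bool) :
    Reach (cons true (cons true (cons false σ))) (cons true (cons false (cons true σ))) := by
  have := reach_g (cons true (cons true (cons false σ)))
  rwa [gstep_cons2, fstep_cons20] at this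

def wapp (w : List Bool) (σ : ℕ → Bool) : ℕ → Bool := w.foldr cons σ

@[simp] lemma wapp_nil (σ : ℕ → Bool) : wapp [] σ = σ := rfl
@[simp] lemma wapp_cons (d : Bool) (w : List Bool) (σ : ℕ → Bool) :
    wapp (d :: w) σ = cons d (wapp w σ) := rfl
lemma wapp_append (w1 w2 : List Bool) (σ : ℕ → Bool) :
    wapp (w1 ++ w2) σ = wapp w1 (wapp w2 σ) := by
  simp [wapp, List.foldr_append]

lemma reach_word_aux : ∀ n : ℕ, ∀ w : List Bool, w.length ≤ n → true ∈ w → false ∈ w →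
    ∀ σ : ℕ → Bool, Reach (wapp w σ) (cons true (cons false σ)) := by
  intro n
  induction n with
  | zero =>
    intro w hl ht _ σ
    rw [Nat.le_zero, List.length_eq_zero_iff] at hl
    subst hl
    simp at ht
  | succ n ih =>
    intro w hl ht hf σ
    rcases w with _ | ⟨a, w1⟩
    · simp at ht
    rcases w1 with _ | ⟨b, r⟩
    · cases a <;> simp_all
    have hlr : r.length + 2 ≤ n + 1 := by simpa using hl
    have hTF : ∀ r2 : List Bool, r2.length + 2 ≤ n + 1 →
        Reach (wapp (true :: false :: r2) σ) (cons true (cons false σ)) := by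
      intro r2 h2
      rcases r2 with _ | ⟨c, r'⟩
      · exact Reach.refl _
      · have h3 : (true :: false :: r').length ≤ n := by simp at h2 ⊢; omega
        cases c
        · refine Reach.trans ?_ (ih _ h3 (by simp) (by simp) σ)
          exact (R4 (wapp r' σ)).symm
        · refine Reach.trans ?_ (ih _ h3 (by simp) (by simp) σ)
          exact Reach.trans (R5 (wapp r' σ)).symm (R3 (cons false (wapp r' σ)))
    simp only [wapp_cons]
    cases a <;> cases b
    · -- ff ff
      have ht' : true ∈ r := by simpa using ht
      refine Reach.trans (R1 (wapp r σ)).symm ?_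
      have := ih (false :: r) (by simpa using hlr) (by simp [ht']) (by simp) σ
      simpa using this
    · -- ff tt
      exact Reach.trans (R2 (wapp r σ)).symm (hTF r hlr)
    · -- tt ff
      exact hTF r hlr
    · -- tt tt
      have hf' : false ∈ r := by simpa using hf
      refine Reach.trans (R3 (wapp r σ)) ?_
      have := ih (true :: r) (by simpa using hlr) (by simp) (by simp [hf']) σ
      simpa using this

lemma reach_word (w : List Bool) (ht : true ∈ w) (hf : false ∈ w) (σ : ℕ → Bool) :
    Reach (wapp w σ) (cons true (cons false σ)) :=
  reach_word_aux w.length w le_rfl ht hf σ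


lemma cval_mem_cantorC (s : ℕ → Bool) : cval s ∈ cantorC := by
  refine ⟨fun n => if s n then 2 else 0, fun n => by cases s n <;> simp, ?_⟩
  unfold cval
  congr 1 with n
  cases hn : s n <;> simp [dval, hn]

lemma exists_seq {x : ℝ} (hx : x ∈ cantorC) : ∃ s, cval s = x := by
  obtain ⟨a, ha, rfl⟩ := hx
  refine ⟨fun n => if a n = 2 then true else false, ?_⟩
  unfold cval
  congr 1 with n
  rcases ha n with h | h <;> simp [h, dval]

lemma cantorC_eq_range : cantorC = Set.range cval := by
  ext x
  constructor
  · exact fun h => (exists_seq h).imp fun s hs => hs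
  · rintro ⟨s, rfl⟩
    exact cval_mem_cantorC s

lemma cval_continuous : Continuous cval := by
  apply continuous_tsum (u := fun n => 2/3 * (1/3 : ℝ) ^ n)
  · intro n
    exact (Continuous.comp (continuous_of_discreteTopology (f := dval))
      (continuous_apply n)).div_const _
  · exact summable_bound
  · intro n s
    rw [Real.norm_eq_abs, abs_of_nonneg (term_nonneg s n)]
    exact term_le s n

lemma isClosed_cantorC : IsClosed cantorC := by
  rw [cantorC_eq_range]
  exact (isCompact_range cval_continuous).isClosed

lemma isClosed_cantorI : IsClosed cantorI :=
  IsClosed.preimage continuous_subtype_val isClosed_cantorC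

lemma cval_const_false : cval (fun _ => false) = 0 := by
  unfold cval; simp [dval]

lemma cval_const_true : cval (fun _ => true) = 1 := by
  unfold cval
  rw [tsum_congr (fun n => show dval true / 3 ^ (n+1) = 2/3 * (1/3:ℝ)^n by
    rw [dval_true, pow_succ, one_div, inv_pow]; field_simp)]
  rw [tsum_mul_left, tsum_geometric_of_lt_one (by norm_num) (by norm_num)]
  norm_num

lemma exists_digit_true {s : ℕ → Bool} (h : cval s ≠ 0) : ∃ n, s n = true := by
  by_contra h'
  push_neg at h'
  exact h (by rw [show s = fun _ => false from funext fun n => by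
    simpa using h' n, cval_const_false])

lemma exists_digit_false {s : ℕ → Bool} (h : cval s ≠ 1) : ∃ n, s n = false := by
  by_contra h'
  push_neg at h'
  exact h (by rw [show s = fun _ => true from funext fun n => by
    simpa using h' n, cval_const_true])

lemma cval_agree : ∀ (n : ℕ) (a b : ℕ → Bool), (∀ k < n, a k = b k) →
    |cval a - cval b| ≤ (1/3) ^ n := by
  intro n
  induction n with
  | zero =>
    intro a b _
    rw [pow_zero, abs_le]
    constructor <;>
      linarith [cval_nonneg a, cval_le_one a, cval_nonneg b, cval_le_one b]
  | succ n ih =>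
    intro a b h
    have h0 : a 0 = b 0 := h 0 (Nat.succ_pos n)
    have hsh := ih (sh a) (sh b) (fun k hk => h (k+1) (by omega))
    have ha := cval_rec a
    have hb := cval_rec b
    rw [h0] at ha
    have : cval a - cval b = (cval (sh a) - cval (sh b))/3 := by
      rw [ha, hb]; ring
    rw [this, abs_div, abs_of_nonneg (by norm_num : (0:ℝ) ≤ 3), pow_succ]
    rw [div_le_iff₀ (by norm_num)]
    calc |cval (sh a) - cval (sh b)| ≤ (1/3)^n := hsh
      _ = (1/3)^n * (1/3) * 3 := by ring
    
lemma wapp_ofFn_self : ∀ (m : ℕ) (s : ℕ → Bool),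
    wapp (List.ofFn fun i : Fin m => s i) (fun k => s (k + m)) = s := by
  intro m
  induction m with
  | zero => intro s; funext k; simp [wapp]
  | succ m ih =>
    intro s
    rw [List.ofFn_succ]
    have h1 : (fun i : Fin m => s (Fin.succ i)) = fun i : Fin m => sh s i := by
      funext i; simp [sh, Fin.val_succ]
    have h2 : (fun k => s (k + (m+1))) = fun k => sh s (k + m) := by
      funext k; simp [sh]; ring_nf
    rw [wapp_cons, h1, h2, ih (sh s)]
    have : s ((0 : Fin (m+1)) : ℕ) = s 0 := rfl
    rw [this]
    exact cons_sh s

lemma wapp_ofFn_lt : ∀ (n : ℕ) (t : ℕ → Bool) (τ : ℕ → Bool) (k : ℕ), k < n →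
    wapp (List.ofFn fun i : Fin n => t i) τ k = t k := by
  intro n
  induction n with
  | zero => intro t τ k hk; omega
  | succ n ih =>
    intro t τ k hk
    rw [List.ofFn_succ]
    have h1 : (fun i : Fin n => t (Fin.succ i)) = fun i : Fin n => sh t i := by
      funext i; simp [sh, Fin.val_succ]
    rw [wapp_cons]
    match k with
    | 0 => simp
    | k + 1 =>
      rw [cons_succ, h1, ih (sh t) τ k (by omega)]
      rfl

lemma ival_mem_cantorI (s : ℕ → Bool) : ival s ∈ cantorI := cval_mem_cantorC s

lemma exists_ival {x : unitInterval} (hx : x ∈ cantorI) : ∃ s, ival s = x := by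
  obtain ⟨s, hs⟩ := exists_seq hx
  exact ⟨s, Subtype.ext hs⟩

lemma fio_image : ⇑fio '' cantorI = cantorI := by
  apply Set.Subset.antisymm
  · rintro y ⟨x, hx, rfl⟩
    obtain ⟨s, rfl⟩ := exists_ival hx
    rw [fio_ival]
    exact ival_mem_cantorI _
  · intro y hy
    obtain ⟨t, rfl⟩ := exists_ival hy
    obtain ⟨s, hs⟩ := fstep_surj t
    exact ⟨ival s, ival_mem_cantorI s, by rw [fio_ival, hs]⟩

lemma gio_image : ⇑gio '' cantorI = cantorI := by
  apply Set.Subset.antisymm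
  · rintro y ⟨x, hx, rfl⟩
    obtain ⟨s, rfl⟩ := exists_ival hx
    rw [gio_ival]
    exact ival_mem_cantorI _
  · intro y hy
    obtain ⟨t, rfl⟩ := exists_ival hy
    obtain ⟨s, hs⟩ := gstep_surj t
    exact ⟨ival s, ival_mem_cantorI s, by rw [gio_ival, hs]⟩

def presC : Subgroup IntervalHomeo where
  carrier := {h : IntervalHomeo | ⇑h '' cantorI = cantorI}
  one_mem' := by simp
  mul_mem' := by
    intro a b ha hb
    show ⇑(a * b) '' cantorI = cantorI
    rw [show ⇑(a * b) = ⇑a ∘ ⇑b from rfl, Set.image_comp]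
    rw [show ⇑b '' cantorI = cantorI from hb, show ⇑a '' cantorI = cantorI from ha]
  inv_mem' := by
    intro a ha
    show ⇑a⁻¹ '' cantorI = cantorI
    conv_lhs => rw [← show ⇑a '' cantorI = cantorI from ha]
    rw [← Set.image_comp]
    have : ⇑a⁻¹ ∘ ⇑a = id := funext fun x => a.inv_apply_self x
    rw [this, Set.image_id]

lemma GG_pres {h : IntervalHomeo} (hh : h ∈ GG) : ⇑h '' cantorI = cantorI := by
  have : GG ≤ presC := by
    rw [GG, Subgroup.closure_le]
    rintro e (rfl | rfl)
    · exact fio_image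
    · exact gio_image
  exact this hh

theorem stmt8_aux : ∃ f g : IntervalHomeo,
    ⇑f '' cantorI = cantorI ∧ ⇑g '' cantorI = cantorI ∧
    ∀ x : unitInterval, x ∈ cantorI → x ≠ 0 → x ≠ 1 →
      closure (orbit (Subgroup.closure {f, g}) x) = cantorI := by
  refine ⟨fio, gio, fio_image, gio_image, ?_⟩
  intro x hx hx0 hx1
  have hG : Subgroup.closure {fio, gio} = GG := rfl
  apply Set.Subset.antisymm
  · -- closure (orbit) ⊆ cantorI
    apply closure_minimal _ isClosed_cantorI
    rintro y ⟨h, hh, rfl⟩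
    rw [hG] at hh
    rw [← GG_pres hh]
    exact ⟨x, hx, rfl⟩
  · -- cantorI ⊆ closure (orbit)
    intro y hy
    obtain ⟨s, hs⟩ := exists_ival hx
    obtain ⟨t, rfl⟩ := exists_ival hy
    have hs0 : cval s ≠ 0 := by
      intro h
      exact hx0 (by rw [← hs]; exact Subtype.ext (by simpa [ival] using h))
    have hs1 : cval s ≠ 1 := by
      intro h
      exact hx1 (by rw [← hs]; exact Subtype.ext (by simpa [ival] using h))
    obtain ⟨i0, hi0⟩ := exists_digit_true hs0
    obtain ⟨j0, hj0⟩ := exists_digit_false hs1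
    set m := max i0 j0 + 1 with hm
    set u := List.ofFn (fun i : Fin m => s i) with hu
    set σ0 : ℕ → Bool := fun k => s (k + m) with hσ0
    have huw : wapp u σ0 = s := wapp_ofFn_self m s
    have hut : true ∈ u := by
      rw [hu, List.mem_ofFn]
      exact ⟨⟨i0, by omega⟩, hi0⟩
    have huf : false ∈ u := by
      rw [hu, List.mem_ofFn]
      exact ⟨⟨j0, by omega⟩, hj0⟩
    rw [Metric.mem_closure_iff]
    intro ε hε
    obtain ⟨n, hn⟩ := exists_pow_lt_of_lt_one hε (show (1/3 : ℝ) < 1 by norm_num)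
    set w := (List.ofFn fun i : Fin n => t i) ++ [true, false] with hw
    have hreach : Reach s (wapp w σ0) := by
      have r1 : Reach (wapp u σ0) (cons true (cons false σ0)) :=
        reach_word u hut huf σ0
      rw [huw] at r1
      have r2 : Reach (wapp w σ0) (cons true (cons false σ0)) :=
        reach_word w (by simp [hw]) (by simp [hw]) σ0
      exact r1.trans r2.symm
    obtain ⟨h, hh, heval⟩ := hreach
    refine ⟨h x, ⟨h, by rw [hG]; exact hh, rfl⟩, ?_⟩
    rw [← hs, heval]
    have hagree : ∀ k < n, t k = wapp w σ0 k := by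
      intro k hk
      rw [hw, wapp_append]
      exact (wapp_ofFn_lt n t _ k hk).symm
    have hdist := cval_agree n t (wapp w σ0) hagree
    have : dist (ival t) (ival (wapp w σ0)) = |cval t - cval (wapp w σ0)| := by
      rw [Subtype.dist_eq, Real.dist_eq]
      rfl
    rw [this]
    exact lt_of_le_of_lt hdist hn

end

/-- There are orientation-preserving homeomorphisms `f`, `g` of `[0,1]`
preserving the middle-thirds Cantor set `C` such that, for the group they generate, every
`x ∈ C` other than `0` and `1` has orbit closure equal to `C`. -/
theorem stmt8 : ∃ f g : IntervalHomeo,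
    ⇑f '' cantorI = cantorI ∧ ⇑g '' cantorI = cantorI ∧
    ∀ x : unitInterval, x ∈ cantorI → x ≠ 0 → x ≠ 1 →
      closure (orbit (Subgroup.closure {f, g}) x) = cantorI := by
  exact stmt8_aux
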